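/- arXiv:2206.15091 — 2 statements merged into one kernel-verified Lean document; each statement's English description precedes it below -/
import Mathlib

section
/- If G is a graph with tcw_0(G) = k, then every vertex of G has degree at most k^2. -/
open scoped Classical

noncomputable section

namespace PaperSTCW

open SimpleGraph Finset

/-- Degree of a vertex in a multiset of edges over `Sym2 W`, loops counting twice. -/
def mdeg {W : Type} (E : Multiset (Sym2 W)) (v : W) : ℕ :=
  (E.map fun e => if e = Sym2.diag v then 2 else if v ∈ e then 1 else 0).sum

/-- Remove the edges incident to `v` and, if `lift = true` and `v` was incident to exactly
two non-loop edges, add the lifted edge between their other endpoints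
(this is the edge replacement performed when suppressing a degree-2 vertex). -/
def nextE {W : Type} (lift : Bool) (v : W) (E : Multiset (Sym2 W)) : Multiset (Sym2 W) :=
  E.filter (fun e => v ∉ e) +
    (if lift then
      (match (E.filter (fun e => v ∈ e)).toList.map
          (fun e => if hm : v ∈ e then Sym2.Mem.other hm else v) with
        | [a, b] => ({s(a, b)} : Multiset (Sym2 W))
        | _ => 0)
     else 0)

/-- Exhaustively delete (and, when `lift = true`, suppress) vertices outside `X` of degree
at most `d` from the multigraph with vertex set `S` and edge multiset `E`;
returns the surviving vertex set. -/
def reduce {W : Type} (X : Finset W) (d : ℕ) (lift : Bool)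
    (S : Finset W) (E : Multiset (Sym2 W)) : Finset W :=
  if h : ∃ v, v ∈ S ∧ v ∉ X ∧ mdeg E v ≤ d then
    reduce X d lift (S.erase h.choose) (nextE lift h.choose E)
  else S
termination_by S.card
decreasing_by exact Finset.card_erase_lt_of_mem h.choose_spec.1

/-- A tree-cut decomposition of `G`: a rooted tree together with a near-partition of the
vertices of `G` into bags (each vertex lies in exactly one bag; bags may be empty). -/
structure TCD {V : Type} [Fintype V] (G : SimpleGraph V) where
  n : ℕ
  T : SimpleGraph (Fin n)
  tree : T.IsTree
  root : Fin n
  bag : Fin n → Finset V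
  partition : ∀ v : V, ∃! t, v ∈ bag t

variable {V : Type} [Fintype V] {G : SimpleGraph V}

/-- The set of nodes in the subtree rooted at `t` (those nodes all of whose walks
from the root pass through `t`). -/
def TCD.desc (D : TCD G) (t : Fin D.n) : Set (Fin D.n) :=
  {s | ∀ p : D.T.Walk D.root s, t ∈ p.support}

/-- The union of the bags of the subtree rooted at `t`. -/
def TCD.Y (D : TCD G) (t : Fin D.n) : Finset V :=
  Finset.univ.filter fun v => ∃ s, s ∈ D.desc t ∧ v ∈ D.bag s

/-- Adhesion of a node: the number of edges of `G` with exactly one endpoint in `Y t`. -/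
def TCD.adh (D : TCD G) (t : Fin D.n) : ℕ :=
  ((Finset.univ : Finset (Sym2 V)).filter fun e =>
    e ∈ G.edgeSet ∧ ∃ a b, e = s(a, b) ∧ a ∈ D.Y t ∧ b ∉ D.Y t).card

/-- The connected components of `T - t`. -/
def TCD.Cmp (D : TCD G) (t : Fin D.n) : Type :=
  (SimpleGraph.induce {s | s ≠ t} D.T).ConnectedComponent

instance (D : TCD G) (t : Fin D.n) : Fintype (D.Cmp t) := by
  unfold TCD.Cmp; infer_instance

/-- The consolidation map of the torso at `t`: vertices of the bag of `t` are kept,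
all vertices in the bags of a fixed connected component of `T - t` are consolidated
into a single vertex. -/
def TCD.toTorso (D : TCD G) (t : Fin D.n) (v : V) : V ⊕ D.Cmp t :=
  if h : ∃ s, s ≠ t ∧ v ∈ D.bag s then
    Sum.inr ((SimpleGraph.induce {s | s ≠ t} D.T).connectedComponentMk
      ⟨h.choose, h.choose_spec.1⟩)
  else Sum.inl v

/-- Vertex set of the torso at `t`. -/
def TCD.torsoS (D : TCD G) (t : Fin D.n) : Finset (V ⊕ D.Cmp t) :=
  ((D.bag t).image Sum.inl) ∪ (Finset.univ.image Sum.inr)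

/-- Edge multiset of the torso at `t` (consolidation keeps multiplicities and drops loops). -/
def TCD.torsoE (D : TCD G) (t : Fin D.n) : Multiset (Sym2 (V ⊕ D.Cmp t)) :=
  (((Finset.univ : Finset (Sym2 V)).filter fun e => e ∈ G.edgeSet).val.map
      (Sym2.map (D.toTorso t))).filter fun e => ¬ e.IsDiag

/-- Torso-size: the order of the 3-center of the torso at `t`, obtained by exhaustively
suppressing vertices outside the bag of degree at most 2. -/
def TCD.tor (D : TCD G) (t : Fin D.n) : ℕ :=
  (reduce ((D.bag t).image Sum.inl) 2 true (D.torsoS t) (D.torsoE t)).card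

/-- The order of the 2-center of the torso at `t`, obtained by exhaustively deleting
vertices outside the bag of degree at most 1. -/
def TCD.tor2 (D : TCD G) (t : Fin D.n) : ℕ :=
  (reduce ((D.bag t).image Sum.inl) 1 false (D.torsoS t) (D.torsoE t)).card

/-- The order of the 1-center of the torso at `t`, obtained by deleting isolated
vertices outside the bag. -/
def TCD.tor1 (D : TCD G) (t : Fin D.n) : ℕ :=
  (reduce ((D.bag t).image Sum.inl) 0 false (D.torsoS t) (D.torsoE t)).card

/-- Width of a tree-cut decomposition. -/
def TCD.width (D : TCD G) : ℕ := Finset.univ.sup fun t => max (D.adh t) (D.tor t)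

/-- Slim width of a tree-cut decomposition. -/
def TCD.slimWidth (D : TCD G) : ℕ := Finset.univ.sup fun t => max (D.adh t) (D.tor2 t)

/-- 0-width of a tree-cut decomposition. -/
def TCD.zeroWidth (D : TCD G) : ℕ := Finset.univ.sup fun t => max (D.adh t) (D.tor1 t)

/-- Tree-cut width. -/
def tcw {V : Type} [Fintype V] (G : SimpleGraph V) : ℕ :=
  sInf {k | ∃ D : TCD G, D.width ≤ k}

/-- Slim tree-cut width. -/
def stcw {V : Type} [Fintype V] (G : SimpleGraph V) : ℕ :=
  sInf {k | ∃ D : TCD G, D.slimWidth ≤ k}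

/-- 0-tree-cut width. -/
def tcw0 {V : Type} [Fintype V] (G : SimpleGraph V) : ℕ :=
  sInf {k | ∃ D : TCD G, D.zeroWidth ≤ k}


/-! ### Bundled finite graphs and weak immersions -/

structure FG where
  V : Type
  [fin : Fintype V]
  G : SimpleGraph V

attribute [instance] FG.fin

/-- One step of obtaining a graph from another: an isomorphic copy, deleting an edge,
deleting a vertex, or lifting a pair of incident edges `(x,y), (y,z)` (deleting them
and adding the edge `(x,z)`). `ImmStep B A` means `B` is obtained from `A`. -/
inductive ImmStep : FG → FG → Prop
  | iso (A B : FG) : (Nonempty (B.G ≃g A.G)) → ImmStep B A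
  | delEdge (A : FG) (e : Sym2 A.V) (he : e ∈ A.G.edgeSet) :
      ImmStep (FG.mk A.V (A.G.deleteEdges {e})) A
  | delVertex (A : FG) (v : A.V) :
      ImmStep (FG.mk {w : A.V // w ≠ v} (SimpleGraph.induce {w : A.V | w ≠ v} A.G)) A
  | lift (A : FG) (x y z : A.V) (hxy : A.G.Adj x y) (hyz : A.G.Adj y z) (hxz : x ≠ z) :
      ImmStep (FG.mk A.V (SimpleGraph.fromEdgeSet
        ((A.G.edgeSet \ {s(x, y), s(y, z)}) ∪ {s(x, z)}))) A

/-- `Immersion H G` : `G` contains `H` as a weak immersion, i.e. `H` can be obtained from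
`G` by a sequence of edge deletions, vertex deletions and liftings. -/
def Immersion (H G : FG) : Prop := Relation.ReflTransGen ImmStep H G

/-- `H` consists of `m` cycles intersecting in one vertex and otherwise pairwise
vertex-disjoint. -/
def IsFlower (m : ℕ) {W : Type} [Fintype W] (H : SimpleGraph W) : Prop :=
  H.Connected ∧ ∃ c : W, H.degree c = 2 * m ∧ ∀ v : W, v ≠ c → H.degree v = 2

/-- `H` consists of `m` paths with the same two endpoints which are otherwise pairwise
vertex-disjoint. -/
def IsTheta (m : ℕ) {W : Type} [Fintype W] (H : SimpleGraph W) : Prop :=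
  H.Connected ∧ ∃ x y : W, x ≠ y ∧ H.degree x = m ∧ H.degree y = m ∧
    (∀ v : W, v ≠ x → v ≠ y → H.degree v = 2) ∧
    (SimpleGraph.induce {v : W | v ≠ x} H).IsAcyclic ∧
    (SimpleGraph.induce {v : W | v ≠ y} H).IsAcyclic

/-- The star `K_{1,r}`. -/
def star (r : ℕ) : SimpleGraph (Fin 1 ⊕ Fin r) := completeBipartiteGraph (Fin 1) (Fin r)

/-- The windmill `W_r`: `r` triangles sharing one vertex, otherwise vertex-disjoint. -/
def windmill (r : ℕ) : SimpleGraph (Option (Fin r × Fin 2)) :=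
  SimpleGraph.fromRel (fun x y =>
    x = none ∨ ∃ (i : Fin r) (a b : Fin 2), x = some (i, a) ∧ y = some (i, b))

/-- `G` is the `k`-edge sum `G₁ ⊕ₖ G₂` at vertices `v₁, v₂` of degree `k`. -/
def IsEdgeSum {V₁ V₂ : Type} [Fintype V₁] [Fintype V₂] (k : ℕ)
    (G₁ : SimpleGraph V₁) (G₂ : SimpleGraph V₂) (v₁ : V₁) (v₂ : V₂)
    (G : SimpleGraph ({x : V₁ // x ≠ v₁} ⊕ {y : V₂ // y ≠ v₂})) : Prop :=
  G₁.degree v₁ = k ∧ G₂.degree v₂ = k ∧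
  ∃ π : V₁ → V₂, Set.BijOn π (G₁.neighborSet v₁) (G₂.neighborSet v₂) ∧
    (∀ a b : {x : V₁ // x ≠ v₁}, G.Adj (Sum.inl a) (Sum.inl b) ↔ G₁.Adj a b) ∧
    (∀ a b : {y : V₂ // y ≠ v₂}, G.Adj (Sum.inr a) (Sum.inr b) ↔ G₂.Adj a b) ∧
    (∀ (a : {x : V₁ // x ≠ v₁}) (b : {y : V₂ // y ≠ v₂}),
      G.Adj (Sum.inl a) (Sum.inr b) ↔ (G₁.Adj v₁ a ∧ π (a : V₁) = (b : V₂)))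

/-! ### Treewidth and maximum degree -/

/-- A tree decomposition of `G`. -/
structure TreeDecomp {V : Type} [Fintype V] (G : SimpleGraph V) where
  n : ℕ
  T : SimpleGraph (Fin n)
  tree : T.IsTree
  bag : Fin n → Finset V
  cover_v : ∀ v : V, ∃ t, v ∈ bag t
  cover_e : ∀ u v : V, G.Adj u v → ∃ t, u ∈ bag t ∧ v ∈ bag t
  coherent : ∀ v : V, (SimpleGraph.induce {t : Fin n | v ∈ bag t} T).Connected

/-- Width of a tree decomposition: maximum bag size minus one. -/
def TreeDecomp.width (D : TreeDecomp G) : ℕ :=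
  (Finset.univ.sup fun t => (D.bag t).card) - 1

/-- Treewidth. -/
def tw {V : Type} [Fintype V] (G : SimpleGraph V) : ℕ :=
  sInf {w | ∃ D : TreeDecomp G, D.width ≤ w}

/-- Maximum degree. -/
def maxDeg {V : Type} [Fintype V] (G : SimpleGraph V) : ℕ :=
  Finset.univ.sup fun v => G.degree v

/-! ### Edge-cut width, super edge-cut width, feedback edge number -/

/-- `T` is a maximal spanning forest of `G`. -/
def IsMSF {V : Type} (G T : SimpleGraph V) : Prop :=
  T ≤ G ∧ T.IsAcyclic ∧ ∀ u v : V, G.Adj u v → T.Reachable u v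

/-- The size of the local feedback edge set at `v`: edges of `G` outside `T` whose unique
`T`-path between their endpoints contains `v`. -/
def elocCard {V : Type} [Fintype V] (G T : SimpleGraph V) (v : V) : ℕ :=
  ((Finset.univ : Finset (Sym2 V)).filter fun e =>
    e ∈ G.edgeSet ∧ e ∉ T.edgeSet ∧
      ∃ a b : V, e = s(a, b) ∧ ∃ p : T.Walk a b, p.IsPath ∧ v ∈ p.support).card

/-- Edge-cut width of a pair `(G, T)`. -/
def ecwPair {V : Type} [Fintype V] (G T : SimpleGraph V) : ℕ :=
  1 + Finset.univ.sup fun v => elocCard G T v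

/-- Edge-cut width. -/
def ecw {V : Type} [Fintype V] (G : SimpleGraph V) : ℕ :=
  sInf {k | ∃ T : SimpleGraph V, IsMSF G T ∧ ecwPair G T ≤ k}

/-- Super edge-cut width: minimum edge-cut width over all supergraphs of `G`. -/
def secw {V : Type} [Fintype V] (G : SimpleGraph V) : ℕ :=
  sInf {k | ∃ (W : Type) (fW : Fintype W) (H : SimpleGraph W) (ι : V ↪ W),
    (∀ u v : V, G.Adj u v → H.Adj (ι u) (ι v)) ∧
    ∃ T : SimpleGraph W, IsMSF H T ∧ @ecwPair W fW H T ≤ k}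

/-- Feedback edge number: minimum number of edges whose deletion makes `G` a forest. -/
def fen {V : Type} [Fintype V] (G : SimpleGraph V) : ℕ :=
  sInf {m | ∃ F : Finset (Sym2 V), ↑F ⊆ G.edgeSet ∧ F.card = m ∧
    (G.deleteEdges ↑F).IsAcyclic}

/-! ### Nice decompositions -/

/-- The children of `t` in the rooted tree of `D`. -/
def TCD.children (D : TCD G) (t : Fin D.n) : Finset (Fin D.n) :=
  Finset.univ.filter fun s => D.T.Adj t s ∧ s ∈ D.desc t

/-- The neighborhood of a vertex set `S` in `G`. -/
def nbhd {V : Type} [Fintype V] (G : SimpleGraph V) (S : Finset V) : Finset V :=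
  Finset.univ.filter fun v => v ∉ S ∧ ∃ u ∈ S, G.Adj u v

/-- A non-root node is thin if its adhesion is at most 2. -/
def TCD.IsThin (D : TCD G) (t : Fin D.n) : Prop := t ≠ D.root ∧ D.adh t ≤ 2

/-- A tree-cut decomposition is nice if for every thin node `t`, `N(Y_t)` avoids the
sets `Y_b` of all siblings `b` of `t`. -/
def TCD.IsNice (D : TCD G) : Prop :=
  ∀ t : Fin D.n, D.IsThin t →
    ∀ p b : Fin D.n, t ∈ D.children p → b ∈ D.children p → b ≠ t →
      ∀ v ∈ nbhd G (D.Y t), v ∉ D.Y b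

/-- `B_t`: the thin children `b` of `t` with `|N(Y_b)| ≤ 2` and `N(Y_b) ⊆ X_t`. -/
def TCD.B (D : TCD G) (t : Fin D.n) : Finset (Fin D.n) :=
  (D.children t).filter fun b => (nbhd G (D.Y b)).card ≤ 2 ∧ nbhd G (D.Y b) ⊆ D.bag t

/-- `B_t^{(2)}`: the members of `B_t` of adhesion exactly 2. -/
def TCD.B2 (D : TCD G) (t : Fin D.n) : Finset (Fin D.n) :=
  (D.B t).filter fun b => D.adh b = 2

end PaperSTCW


open scoped Classical

noncomputable section
namespace PaperSTCW

open SimpleGraph Finset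

lemma mdeg_pos {W : Type} {E : Multiset (Sym2 W)} {u : W} {e : Sym2 W}
    (he : e ∈ E) (hu : u ∈ e) : 1 ≤ mdeg E u := by
  have h1 : (1:ℕ) ≤ if e = Sym2.diag u then 2 else if u ∈ e then 1 else 0 := by
    split
    · omega
    · simp [hu]
  exact le_trans h1 (Multiset.single_le_sum (fun x _ => Nat.zero_le x) _
    (Multiset.mem_map_of_mem _ he))

lemma nextE_false {W : Type} (u : W) (E : Multiset (Sym2 W)) :
    nextE false u E = E.filter (fun e => u ∉ e) := by
  simp [nextE]

lemma subset_reduce {W : Type} (X : Finset W) (v0 : W) (N : Finset W) (hv0X : v0 ∈ X) :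
    ∀ (n : ℕ) (S : Finset W) (E : Multiset (Sym2 W)), S.card ≤ n → v0 ∈ S →
    (∀ w ∈ N, w ∈ S ∧ w ≠ v0 ∧ s(v0, w) ∈ E) →
    v0 ∈ reduce X 0 false S E ∧ N ⊆ reduce X 0 false S E := by
  intro n
  induction n with
  | zero =>
    intro S E hc hv _
    exact absurd (Finset.card_pos.2 ⟨v0, hv⟩) (by omega)
  | succ n ih =>
    intro S E hc hv hN
    rw [reduce]
    split
    · next h =>
      obtain ⟨huS, huX, hdeg⟩ := h.choose_spec
      have huv0 : h.choose ≠ v0 := fun he => huX (he ▸ hv0X)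
      have huN : h.choose ∉ N := by
        intro hmem
        obtain ⟨_, _, hE⟩ := hN _ hmem
        have := mdeg_pos hE (Sym2.mem_mk_right v0 h.choose)
        omega
      apply ih
      · have := Finset.card_erase_of_mem huS; omega
      · exact Finset.mem_erase.2 ⟨Ne.symm huv0, hv⟩
      · intro w hw
        obtain ⟨h1, h2, h3⟩ := hN w hw
        have hwu : w ≠ h.choose := fun he => huN (he ▸ hw)
        refine ⟨Finset.mem_erase.2 ⟨hwu, h1⟩, h2, ?_⟩
        rw [nextE_false, Multiset.mem_filter]
        refine ⟨h3, ?_⟩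
        rw [Sym2.mem_iff]
        push_neg
        exact ⟨huv0, fun e => hwu e.symm⟩
    · next =>
      exact ⟨hv, fun x hx => (hN x hx).1⟩

lemma induced_walk_lift {n : ℕ} {T : SimpleGraph (Fin n)} {t : Fin n}
    {a b : ↥{s : Fin n | s ≠ t}} (p : (SimpleGraph.induce {s : Fin n | s ≠ t} T).Walk a b) :
    ∃ w : T.Walk a.1 b.1, ∀ x ∈ w.support, x ≠ t := by
  induction p with
  | nil =>
    rename_i u
    refine ⟨.nil, ?_⟩
    intro x hx
    rw [Walk.support_nil, List.mem_singleton] at hx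
    subst hx
    exact u.2
  | @cons x y z h p ih =>
    obtain ⟨w, hw⟩ := ih
    refine ⟨.cons h w, ?_⟩
    intro a ha
    have ha : a = x.1 ∨ a ∈ w.support := List.mem_cons.1 ha
    rcases ha with rfl | ha
    · exact x.2
    · exact hw a ha

lemma mem_Y_iff {V : Type} [Fintype V] {G : SimpleGraph V} (D : TCD G) (q : Fin D.n)
    {u : V} {r : Fin D.n} (hur : u ∈ D.bag r) :
    u ∈ D.Y q ↔ r ∈ D.desc q := by
  have huniq : ∀ s, u ∈ D.bag s → s = r := by
    obtain ⟨r', -, hr'⟩ := D.partition u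
    intro s hs
    rw [hr' s hs, hr' r hur]
  constructor
  · intro hY
    simp only [TCD.Y, Finset.mem_filter] at hY
    obtain ⟨-, s, hs, hbs⟩ := hY
    rwa [huniq s hbs] at hs
  · intro hd
    simp only [TCD.Y, Finset.mem_filter]
    exact ⟨Finset.mem_univ _, r, hd, hur⟩

lemma comp_cut {V : Type} [Fintype V] {G : SimpleGraph V} (D : TCD G) (t : Fin D.n)
    {v : V} (hv : v ∈ D.bag t) (r₀ : Fin D.n) (hr₀ : r₀ ≠ t) :
    ∃ q : Fin D.n, ∀ (r : Fin D.n) (hr : r ≠ t),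
      (SimpleGraph.induce {s : Fin D.n | s ≠ t} D.T).Reachable ⟨r₀, hr₀⟩ ⟨r, hr⟩ →
      ∀ u ∈ D.bag r, (u ∈ D.Y q ∧ v ∉ D.Y q) ∨ (v ∈ D.Y q ∧ u ∉ D.Y q) := by
  by_cases hcase : r₀ ∈ D.desc t
  case neg =>
    refine ⟨t, fun r hr hreach u hu => ?_⟩
    right
    refine ⟨(mem_Y_iff D t hv).2 (fun p => p.end_mem_support), ?_⟩
    rw [mem_Y_iff D t hu]
    simp only [TCD.desc, Set.mem_setOf_eq, not_forall] at hcase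
    intro hrdesc
    simp only [TCD.desc, Set.mem_setOf_eq] at hrdesc
    obtain ⟨w, hw⟩ := hcase
    obtain ⟨c, hc⟩ := induced_walk_lift hreach.some
    have h3 := hrdesc (w.append c)
    rw [Walk.mem_support_append_iff] at h3
    rcases h3 with h3 | h3
    · exact hw h3
    · exact hc t h3 rfl
  case pos =>
    simp only [TCD.desc, Set.mem_setOf_eq] at hcase
    obtain ⟨w₀'⟩ := D.tree.isConnected.preconnected D.root r₀
    set p₀ := w₀'.bypass with hp₀def
    have hp₀path : p₀.IsPath := w₀'.bypass_isPath
    have ht₀ : t ∈ p₀.support := hcase p₀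
    obtain ⟨q, hq, d', hd'⟩ := Walk.exists_eq_cons_of_ne (Ne.symm hr₀) (p₀.dropUntil t ht₀)
    have hdpath : (p₀.dropUntil t ht₀).IsPath := hp₀path.dropUntil ht₀
    rw [hd', Walk.cons_isPath_iff] at hdpath
    obtain ⟨hd'path, htd'⟩ := hdpath
    have hqt : q ≠ t := fun e => htd' (e ▸ d'.start_mem_support)
    have hnodup := hp₀path.support_nodup
    have h2 : p₀.support = (p₀.takeUntil t ht₀).support ++ (p₀.dropUntil t ht₀).support.tail := by
      rw [← Walk.support_append, p₀.take_spec ht₀]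
    rw [h2] at hnodup
    have hqtail : q ∈ (p₀.dropUntil t ht₀).support.tail := by
      rw [hd', Walk.support_cons]
      exact d'.start_mem_support
    have hqtake : q ∉ (p₀.takeUntil t ht₀).support := by
      intro hmem
      exact (List.disjoint_of_nodup_append hnodup) hmem hqtail
    have htq : t ∉ D.desc q := by
      simp only [TCD.desc, Set.mem_setOf_eq, not_forall]
      exact ⟨p₀.takeUntil t ht₀, hqtake⟩
    refine ⟨q, fun r hr hreach u hu => ?_⟩
    obtain ⟨c, hc⟩ := induced_walk_lift hreach.some
    have hrdesct : ∀ w' : D.T.Walk D.root r, t ∈ w'.support := by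
      intro w'
      have h3 := hcase (w'.append c.reverse)
      rw [Walk.mem_support_append_iff] at h3
      rcases h3 with h3 | h3
      · exact h3
      · rw [Walk.support_reverse, List.mem_reverse] at h3
        exact absurd rfl (hc t h3)
    left
    constructor
    · rw [mem_Y_iff D q hu]
      simp only [TCD.desc, Set.mem_setOf_eq]
      intro w
      apply w.support_bypass_subset
      set pw := w.bypass with hpwdef
      have hpwpath : pw.IsPath := w.bypass_isPath
      have htpw : t ∈ pw.support := hrdesct pw
      obtain ⟨q', hq', e', he'⟩ := Walk.exists_eq_cons_of_ne (Ne.symm hr) (pw.dropUntil t htpw)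
      have hepath := hpwpath.dropUntil htpw
      rw [he', Walk.cons_isPath_iff] at hepath
      obtain ⟨he'path, hte'⟩ := hepath
      have hf : ∀ x ∈ (e'.append (c.reverse.append d'.reverse)).support, x ≠ t := by
        intro x hx
        rw [Walk.mem_support_append_iff] at hx
        rcases hx with hx | hx
        · exact fun e => hte' (e ▸ hx)
        · rw [Walk.mem_support_append_iff] at hx
          rcases hx with hx | hx
          · rw [Walk.support_reverse, List.mem_reverse] at hx
            exact hc x hx
          · rw [Walk.support_reverse, List.mem_reverse] at hx
            exact fun e => htd' (e ▸ hx)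
      set f := (e'.append (c.reverse.append d'.reverse)).bypass with hfdef
      have hfpath : f.IsPath := Walk.bypass_isPath _
      have htf : t ∉ f.support := fun hmem =>
        (hf t (Walk.support_bypass_subset _ hmem)) rfl
      have hP1 : (Walk.cons hq Walk.nil).IsPath := by
        rw [Walk.cons_isPath_iff]
        refine ⟨Walk.IsPath.nil, ?_⟩
        rw [Walk.support_nil, List.mem_singleton]
        exact fun e => hqt e.symm
      have hP2 : (Walk.cons hq' f).IsPath := (Walk.cons_isPath_iff _ _).2 ⟨hfpath, htf⟩
      have hpu := D.tree.IsAcyclic.path_unique ⟨Walk.cons hq Walk.nil, hP1⟩ ⟨Walk.cons hq' f, hP2⟩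
      have hsupeq := congrArg (fun p : D.T.Path t q => p.1.support) hpu
      simp only [Walk.support_cons, Walk.support_nil] at hsupeq
      have hfsup : f.support = [q] := by
        injection hsupeq with h1 h2
        exact h2.symm
      have hq'q : q' = q := by
        have := f.start_mem_support
        rw [hfsup, List.mem_singleton] at this
        exact this
      apply Walk.support_dropUntil_subset pw htpw
      rw [he', Walk.support_cons]
      exact List.mem_cons_of_mem _ (hq'q ▸ e'.start_mem_support)
    · rw [mem_Y_iff D q hv]
      exact htq

def trivialTCD {V : Type} [Fintype V] (G : SimpleGraph V) : TCD G where
  n := 1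
  T := ⊥
  tree := by
    constructor
    · exact SimpleGraph.Connected.mk (fun a b => by rw [Subsingleton.elim a b])
    · intro v c hc
      cases c with
      | nil => exact hc.ne_nil rfl
      | cons h p => simp at h
  root := 0
  bag := fun _ => Finset.univ
  partition := fun v => ⟨0, Finset.mem_univ v, fun y _ => Subsingleton.elim y 0⟩

theorem stmt9' {V : Type} [Fintype V] (G : SimpleGraph V) (k : ℕ) (h : tcw0 G = k) :
    ∀ v : V, G.degree v ≤ k ^ 2 := by
  intro v
  have hne : {m | ∃ D : TCD G, D.zeroWidth ≤ m}.Nonempty :=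
    ⟨(trivialTCD G).zeroWidth, trivialTCD G, le_rfl⟩
  have hk : ∃ D : TCD G, D.zeroWidth ≤ k := by
    have hmem := Nat.sInf_mem hne
    rw [tcw0] at h
    rwa [h] at hmem
  obtain ⟨D, hD⟩ := hk
  have hbound : ∀ s : Fin D.n, D.adh s ≤ k ∧ D.tor1 s ≤ k := by
    intro s
    rw [TCD.zeroWidth] at hD
    have h1 : max (D.adh s) (D.tor1 s) ≤ k :=
      le_trans (Finset.le_sup (f := fun t => max (D.adh t) (D.tor1 t)) (Finset.mem_univ s)) hD
    exact ⟨le_trans (le_max_left _ _) h1, le_trans (le_max_right _ _) h1⟩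
  obtain ⟨t, hvt, htuniq⟩ := D.partition v
  have htv : D.toTorso t v = Sum.inl v := by
    rw [TCD.toTorso, dif_neg]
    rintro ⟨s, hst, hs⟩
    exact hst (htuniq s hs)
  have htorsoS : ∀ u : V, D.toTorso t u ∈ D.torsoS t := by
    intro u
    rw [TCD.toTorso]
    split
    · exact Finset.mem_union_right _ (Finset.mem_image_of_mem _ (Finset.mem_univ _))
    · next hno =>
      obtain ⟨s, hs, -⟩ := D.partition u
      have hst : s = t := by
        by_contra hst
        exact hno ⟨s, hst, hs⟩
      exact Finset.mem_union_left _ (Finset.mem_image_of_mem _ (hst ▸ hs))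
  have hedge : ∀ u : V, G.Adj v u →
      D.toTorso t u ≠ Sum.inl v ∧ s(Sum.inl v, D.toTorso t u) ∈ D.torsoE t := by
    intro u hadj
    have hne' : D.toTorso t u ≠ Sum.inl v := by
      rw [TCD.toTorso]
      split
      · simp
      · intro he
        exact hadj.ne' (Sum.inl.inj he)
    refine ⟨hne', ?_⟩
    rw [TCD.torsoE, Multiset.mem_filter]
    constructor
    · rw [Multiset.mem_map]
      refine ⟨s(v, u), ?_, ?_⟩
      · rw [Finset.mem_val, Finset.mem_filter]
        exact ⟨Finset.mem_univ _, hadj⟩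
      · rw [Sym2.map_pair_eq, htv]
    · rw [Sym2.mk_isDiag_iff]
      exact fun e => hne' e.symm
  set B := (G.neighborFinset v).image (D.toTorso t) with hB
  have hvB : Sum.inl v ∉ B := by
    intro hmem
    rw [hB, Finset.mem_image] at hmem
    obtain ⟨u, hu, he⟩ := hmem
    exact (hedge u ((G.mem_neighborFinset v u).1 hu)).1 he
  have hS1 : Sum.inl v ∈ D.torsoS t := Finset.mem_union_left _ (Finset.mem_image_of_mem _ hvt)
  have hS2 : ∀ b ∈ B, b ∈ D.torsoS t ∧ b ≠ Sum.inl v ∧ s(Sum.inl v, b) ∈ D.torsoE t := by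
    intro b hb
    rw [hB, Finset.mem_image] at hb
    obtain ⟨u, hu, rfl⟩ := hb
    have hadj := (G.mem_neighborFinset v u).1 hu
    exact ⟨htorsoS u, (hedge u hadj).1, (hedge u hadj).2⟩
  obtain ⟨hsubv, hsub⟩ := subset_reduce ((D.bag t).image Sum.inl) (Sum.inl v) B
    (Finset.mem_image_of_mem _ hvt) (D.torsoS t).card (D.torsoS t) (D.torsoE t)
    le_rfl hS1 hS2
  have hcard : B.card + 1 ≤ k := by
    have h1 : B ⊂ reduce ((D.bag t).image Sum.inl) 0 false (D.torsoS t) (D.torsoE t) :=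
      (Finset.ssubset_iff_of_subset hsub).2 ⟨Sum.inl v, hsubv, hvB⟩
    have h2 := Finset.card_lt_card h1
    have h3 : D.tor1 t
        = (reduce ((D.bag t).image Sum.inl) 0 false (D.torsoS t) (D.torsoE t)).card := rfl
    have h4 := (hbound t).2
    omega
  have hfiber : ∀ b ∈ B, ((G.neighborFinset v).filter (fun u => D.toTorso t u = b)).card ≤ k := by
    intro b hb
    have hk1 : 1 ≤ k := by omega
    cases b with
    | inl w =>
      have hss : (G.neighborFinset v).filter (fun u => D.toTorso t u = Sum.inl w) ⊆ {w} := by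
        intro u hu
        rw [Finset.mem_filter] at hu
        obtain ⟨-, hu2⟩ := hu
        rw [TCD.toTorso] at hu2
        split at hu2
        · exact absurd hu2 (by simp)
        · rw [Finset.mem_singleton]
          exact Sum.inl.inj hu2
      calc _ ≤ ({w} : Finset V).card := Finset.card_le_card hss
        _ ≤ k := by simpa using hk1
    | inr C =>
      obtain ⟨q, hq⟩ := comp_cut D t hvt (Quot.out C).1 (Quot.out C).2
      have hle : ((G.neighborFinset v).filter (fun u => D.toTorso t u = Sum.inr C)).card
          ≤ D.adh q := by
        rw [TCD.adh]
        apply Finset.card_le_card_of_injOn (fun u => s(v, u))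
        · intro u hu
          rw [Finset.mem_coe, Finset.mem_filter] at hu
          obtain ⟨hu1, hu2⟩ := hu
          have hadj := (G.mem_neighborFinset v u).1 hu1
          rw [TCD.toTorso] at hu2
          split at hu2
          case isTrue hex =>
            have hmk : (SimpleGraph.induce {s | s ≠ t} D.T).connectedComponentMk
                ⟨hex.choose, hex.choose_spec.1⟩ = C := Sum.inr.inj hu2
            have hreach : (SimpleGraph.induce {s | s ≠ t} D.T).Reachable
                ⟨(Quot.out C).1, (Quot.out C).2⟩ ⟨hex.choose, hex.choose_spec.1⟩ := by
              apply SimpleGraph.ConnectedComponent.exact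
              rw [hmk]
              exact C.out_eq
            have hcut := hq hex.choose hex.choose_spec.1 hreach u hex.choose_spec.2
            rw [Finset.mem_coe, Finset.mem_filter]
            refine ⟨Finset.mem_univ _, hadj, ?_⟩
            rcases hcut with ⟨hu3, hv3⟩ | ⟨hv3, hu3⟩
            · exact ⟨u, v, Sym2.eq_swap, hu3, hv3⟩
            · exact ⟨v, u, rfl, hv3, hu3⟩
          case isFalse _ => exact absurd hu2 (by simp)
        · intro u1 _ u2 _ he
          exact Sym2.congr_right.1 he
      exact le_trans hle (hbound q).1
  have hdeg : G.degree v
      = ∑ b ∈ B, ((G.neighborFinset v).filter (fun u => D.toTorso t u = b)).card := by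
    rw [SimpleGraph.degree, hB]
    exact Finset.card_eq_sum_card_image _ _
  calc G.degree v
      = ∑ b ∈ B, ((G.neighborFinset v).filter (fun u => D.toTorso t u = b)).card := hdeg
    _ ≤ ∑ _b ∈ B, k := Finset.sum_le_sum hfiber
    _ = B.card * k := by rw [Finset.sum_const, smul_eq_mul]
    _ ≤ (k - 1) * k := Nat.mul_le_mul_right _ (by omega)
    _ ≤ k ^ 2 := by
        rw [pow_two]
        exact Nat.mul_le_mul_right _ (by omega)

end PaperSTCW

namespace PaperSTCW
/-- if `tcw₀(G) = k` then every vertex of `G` has degree at most `k²`. -/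
theorem stmt9 {V : Type} [Fintype V] (G : SimpleGraph V) (k : ℕ) (h : tcw0 G = k) :
    ∀ v : V, G.degree v ≤ k ^ 2 := stmt9' G k h
end PaperSTCW
end
end
end

section
/- For every graph G, tcw(G) ≤ secw(G): the tree-cut width of G is at most its super edge-cut width. -/
open scoped Classical

noncomputable section

namespace PaperSTCW

set_option maxHeartbeats 2000000

open SimpleGraph Finset

variable {W : Type}

/-- Adding an edge between non-reachable vertices preserves acyclicity. -/
lemma acyclic_sup_edge {T : SimpleGraph W} (hT : T.IsAcyclic) {u v : W}
    (hr : ¬ T.Reachable u v) :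
    (T ⊔ SimpleGraph.fromEdgeSet {s(u, v)}).IsAcyclic := by
  set G' := T ⊔ SimpleGraph.fromEdgeSet {s(u, v)} with hG'
  intro a p hp
  by_cases he : s(u, v) ∈ p.edges
  · have h2 : G'.Adj u v ∧ (G' \ SimpleGraph.fromEdgeSet {s(u, v)}).Reachable u v :=
      (SimpleGraph.adj_and_reachable_delete_edges_iff_exists_cycle).2 ⟨a, p, hp, he⟩
    have hle : (G' \ SimpleGraph.fromEdgeSet {s(u, v)}) ≤ T := by
      intro x y hxy
      rcases hxy with ⟨hxy1, hxy2⟩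
      rcases hxy1 with h | h
      · exact h
      · exact absurd h hxy2
    exact hr ((h2.2).mono hle)
  · have hsub : ∀ e ∈ p.edges, e ∈ T.edgeSet := by
      intro e hep
      have : e ∈ G'.edgeSet := p.edges_subset_edgeSet hep
      rw [hG', SimpleGraph.edgeSet_sup] at this
      rcases this with h | h
      · exact h
      · rw [SimpleGraph.edgeSet_fromEdgeSet] at h
        exfalso
        have : e = s(u, v) := h.1
        exact he (this ▸ hep)
    exact hT (p.transfer T hsub) (hp.transfer hsub)


/-- Extension of an acyclic subgraph to a maximal spanning forest. -/
lemma exists_msf_ge [Fintype W] (H : SimpleGraph W) :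
    ∀ (n : ℕ) (T₀ : SimpleGraph W),
      {p : W × W | ¬ T₀.Reachable p.1 p.2}.ncard ≤ n →
      T₀ ≤ H → T₀.IsAcyclic →
      ∃ T, T₀ ≤ T ∧ T ≤ H ∧ T.IsAcyclic ∧ ∀ u v : W, H.Adj u v → T.Reachable u v := by
  intro n
  induction n with
  | zero =>
    intro T₀ hcard hle hac
    refine ⟨T₀, le_refl _, hle, hac, fun u v _ => ?_⟩
    by_contra hr
    have hmem : (u, v) ∈ {p : W × W | ¬ T₀.Reachable p.1 p.2} := hr
    have hfin : {p : W × W | ¬ T₀.Reachable p.1 p.2}.Finite := Set.toFinite _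
    have := Set.ncard_eq_zero hfin |>.1 (Nat.le_zero.1 hcard)
    rw [this] at hmem
    exact hmem
  | succ n ih =>
    intro T₀ hcard hle hac
    by_cases hex : ∃ u v : W, H.Adj u v ∧ ¬ T₀.Reachable u v
    · obtain ⟨u, v, huv, hr⟩ := hex
      set T₁ := T₀ ⊔ SimpleGraph.fromEdgeSet {s(u, v)} with hT₁
      have hle1 : T₀ ≤ T₁ := le_sup_left
      have hT₁H : T₁ ≤ H := by
        refine sup_le hle ?_
        intro x y hxy
        rcases hxy with ⟨hm, hne⟩
        have : s(x, y) = s(u, v) := hm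
        rcases Sym2.eq_iff.mp this with ⟨hx, hy⟩ | ⟨hx, hy⟩
        · rw [hx, hy]; exact huv
        · rw [hx, hy]; exact huv.symm
      have hreach1 : T₁.Reachable u v := by
        refine SimpleGraph.Adj.reachable ?_
        exact Or.inr ⟨rfl, huv.ne⟩
      have hcard1 : {p : W × W | ¬ T₁.Reachable p.1 p.2}.ncard ≤ n := by
        have hss : {p : W × W | ¬ T₁.Reachable p.1 p.2} ⊂
            {p : W × W | ¬ T₀.Reachable p.1 p.2} := by
          constructor
          · intro p hp
            exact fun h => hp (h.mono hle1)
          · intro hsub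
            exact (hsub (show (u,v) ∈ _ from hr)) hreach1
        have := Set.ncard_lt_ncard hss (Set.toFinite _)
        omega
      obtain ⟨T, ha1, ha2, ha3, ha4⟩ := ih T₁ hcard1 hT₁H (acyclic_sup_edge hac hr)
      exact ⟨T, le_trans hle1 ha1, ha2, ha3, ha4⟩
    · push_neg at hex
      exact ⟨T₀, le_refl _, hle, hac, fun u v h => hex u v h⟩

lemma exists_msf [Fintype W] (H : SimpleGraph W) :
    ∃ T, IsMSF H T := by
  obtain ⟨T, _, h1, h2, h3⟩ := exists_msf_ge H
    {p : W × W | ¬ (⊥ : SimpleGraph W).Reachable p.1 p.2}.ncard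
    ⊥ le_rfl bot_le SimpleGraph.isAcyclic_bot
  exact ⟨T, h1, h2, h3⟩

lemma exists_tree_ge [Fintype W] [Nonempty W] (T : SimpleGraph W) (hac : T.IsAcyclic) :
    ∃ T', T ≤ T' ∧ T'.IsTree := by
  obtain ⟨T', h0, _, h2, h3⟩ := exists_msf_ge (⊤ : SimpleGraph W)
    {p : W × W | ¬ T.Reachable p.1 p.2}.ncard
    T le_rfl le_top hac
  refine ⟨T', h0, ⟨⟨fun u v => ?_⟩, h2⟩⟩
  by_cases huv : u = v
  · exact huv ▸ SimpleGraph.Reachable.refl u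
  · exact h3 u v huv

/-- A walk avoiding a set's complement yields reachability in the induced subgraph. -/
lemma reachable_induce_of_walk {G : SimpleGraph W} (s : Set W) :
    ∀ {a b : W} (p : G.Walk a b), (∀ x ∈ p.support, x ∈ s) →
      ∀ (ha : a ∈ s) (hb : b ∈ s),
        (SimpleGraph.induce s G).Reachable ⟨a, ha⟩ ⟨b, hb⟩
  | a, _, SimpleGraph.Walk.nil, _, _, _ => SimpleGraph.Reachable.refl _
  | a, b, SimpleGraph.Walk.cons h q, hp, ha, hb => by
    have hx : ∀ x ∈ q.support, x ∈ s := fun x hxs => hp x (by simp [hxs])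
    have hc : _ ∈ s := hx _ q.start_mem_support
    refine SimpleGraph.Reachable.trans (SimpleGraph.Adj.reachable ?_)
      (reachable_induce_of_walk s q hx hc hb)
    exact h

/-- From a walk in an induced subgraph, a walk in the ambient graph whose support
avoids the complement; we only need support containment. -/
lemma walk_of_induce {G : SimpleGraph W} {s : Set W} {a b : s}
    (h : (SimpleGraph.induce s G).Reachable a b) :
    ∃ p : G.Walk a.1 b.1, ∀ x ∈ p.support, x ∈ s := by
  obtain ⟨q⟩ := h
  refine ⟨q.map (SimpleGraph.Embedding.comap (Function.Embedding.subtype s) G).toHom, ?_⟩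
  intro x hx
  have hx' := (congrArg (x ∈ ·) (SimpleGraph.Walk.support_map _ q)).mp hx
  obtain ⟨y, _, rfl⟩ := List.mem_map.1 hx'
  exact y.2

/-- In a tree, two neighbors of `t` joined by a walk avoiding `t` are equal. -/
lemma tree_nbr_unique {T : SimpleGraph W} (hT : T.IsTree) {t x1 x2 : W}
    (h1 : T.Adj t x1) (h2 : T.Adj t x2) (p : T.Walk x1 x2) (hp : t ∉ p.support) : x1 = x2 := by
  have hq : t ∉ p.toPath.1.support := fun h => hp (p.support_toPath_subset h)
  have hpath1 : (SimpleGraph.Walk.cons h1 p.toPath.1).IsPath := by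
    rw [SimpleGraph.Walk.cons_isPath_iff]
    exact ⟨p.toPath.2, hq⟩
  have hpath2 : (SimpleGraph.Walk.cons h2 SimpleGraph.Walk.nil).IsPath := by
    rw [SimpleGraph.Walk.cons_isPath_iff]
    exact ⟨SimpleGraph.Walk.IsPath.nil, by simp [h2.ne]⟩
  obtain ⟨p₀, _, hu⟩ := hT.existsUnique_path t x2
  have heq : SimpleGraph.Walk.cons h1 p.toPath.1 = SimpleGraph.Walk.cons h2 SimpleGraph.Walk.nil :=
    (hu _ hpath1).trans (hu _ hpath2).symm
  have hsup := congrArg SimpleGraph.Walk.support heq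
  rw [SimpleGraph.Walk.support_cons, SimpleGraph.Walk.support_cons,
    SimpleGraph.Walk.support_nil] at hsup
  have : p.toPath.1.support = [x2] := by
    simp only [List.cons.injEq] at hsup
    exact hsup.2
  have h3 := p.toPath.1.support_eq_cons
  rw [this] at h3
  exact (List.cons.inj h3.symm).1

/-- Separation by a vertex all root walks pass through. -/
lemma pass_through {G : SimpleGraph W} {r t a b : W}
    (ha : ∀ p : G.Walk r a, t ∈ p.support)
    (hb : ¬ ∀ p : G.Walk r b, t ∈ p.support)
    (q : G.Walk a b) : t ∈ q.support := by
  by_contra hq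
  push_neg at hb
  obtain ⟨p, hp⟩ := hb
  have := ha (p.append q.reverse)
  rw [SimpleGraph.Walk.mem_support_append_iff] at this
  rcases this with h | h
  · exact hp h
  · rw [SimpleGraph.Walk.support_reverse, List.mem_reverse] at h
    exact hq h



/-- weight of an edge at a vertex -/
def wt (x : W) (e : Sym2 W) : ℕ := if e = Sym2.diag x then 2 else if x ∈ e then 1 else 0

lemma mdeg_eq_sum_wt (E : Multiset (Sym2 W)) (x : W) : mdeg E x = (E.map (wt x)).sum := rfl

lemma mdeg_add (A B : Multiset (Sym2 W)) (x : W) :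
    mdeg (A + B) x = mdeg A x + mdeg B x := by
  simp [mdeg_eq_sum_wt]

lemma wt_pos_of_mem {x : W} {e : Sym2 W} (h : x ∈ e) : 1 ≤ wt x e := by
  unfold wt
  split
  · omega
  · simp [h]

lemma mdeg_nextE_le {v x : W} (hx : x ≠ v) (E : Multiset (Sym2 W)) :
    mdeg (nextE true v E) x ≤ mdeg E x := by
  have hsplit : E.filter (fun e => v ∉ e) + E.filter (fun e => v ∈ e) = E := by
    have := Multiset.filter_add_not (fun e => v ∉ e) E
    simpa using this
  have hkey : mdeg E x = mdeg (E.filter (fun e => v ∉ e)) x + mdeg (E.filter (fun e => v ∈ e)) x := by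
    rw [← mdeg_add, hsplit]
  rw [nextE, if_pos rfl, mdeg_add, hkey]
  refine Nat.add_le_add_left ?_ _
  rcases hl : (E.filter (fun e => v ∈ e)).toList with _ | ⟨e1, l1⟩
  · simp [hl, mdeg]
  rcases l1 with _ | ⟨e2, l2⟩
  · simp [hl, mdeg]
  rcases l2 with _ | ⟨e3, l3⟩
  swap
  · simp [hl, mdeg]
  -- two-element case
  have hmem1 : e1 ∈ E.filter (fun e => v ∈ e) := by
    rw [← Multiset.mem_toList, hl]; simp
  have hmem2 : e2 ∈ E.filter (fun e => v ∈ e) := by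
    rw [← Multiset.mem_toList, hl]; simp
  have hv1 : v ∈ e1 := (Multiset.mem_filter.1 hmem1).2
  have hv2 : v ∈ e2 := (Multiset.mem_filter.1 hmem2).2
  have hfl : E.filter (fun e => v ∈ e) = {e1, e2} := by
    have := Multiset.coe_toList (E.filter (fun e => v ∈ e))
    rw [hl] at this
    rw [← this]
    rfl
  rw [hfl]
  simp only [hl, List.map_cons, List.map_nil]
  have hgoal : mdeg {s(if hm : v ∈ e1 then Sym2.Mem.other hm else v,
      if hm : v ∈ e2 then Sym2.Mem.other hm else v)} x ≤ mdeg {e1, e2} x := by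
    rw [dif_pos hv1, dif_pos hv2]
    set a := Sym2.Mem.other hv1 with ha
    set b := Sym2.Mem.other hv2 with hb
    have hae : a ∈ e1 := Sym2.other_mem hv1
    have hbe : b ∈ e2 := Sym2.other_mem hv2
    have hm12 : mdeg ({e1, e2} : Multiset (Sym2 W)) x = wt x e1 + wt x e2 := by
      simp [mdeg_eq_sum_wt]
    have hm1 : mdeg ({s(a, b)} : Multiset (Sym2 W)) x = wt x s(a, b) := by
      simp [mdeg_eq_sum_wt]
    rw [hm12, hm1]
    by_cases hd : s(a, b) = Sym2.diag x
    · rw [Sym2.diag] at hd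
      have hab : a = x ∧ b = x := by
        rw [Sym2.eq_iff] at hd
        tauto
      have h1 : 1 ≤ wt x e1 := wt_pos_of_mem (hab.1 ▸ hae)
      have h2 : 1 ≤ wt x e2 := wt_pos_of_mem (hab.2 ▸ hbe)
      have : wt x s(a, b) ≤ 2 := by unfold wt; split <;> [omega; split <;> omega]
      omega
    · by_cases hmx : x ∈ s(a, b)
      · have hw : wt x s(a, b) = 1 := by unfold wt; rw [if_neg hd, if_pos hmx]
        rw [Sym2.mem_iff] at hmx
        rcases hmx with h | h
        · have := wt_pos_of_mem (h ▸ hae : x ∈ e1)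
          omega
        · have := wt_pos_of_mem (h ▸ hbe : x ∈ e2)
          omega
      · have hw : wt x s(a, b) = 0 := by unfold wt; rw [if_neg hd, if_neg hmx]
        omega
  exact hgoal

lemma reduce_spec_aux (X : Finset W) :
    ∀ (n : ℕ) (S : Finset W) (E : Multiset (Sym2 W)), S.card ≤ n →
      ∀ x ∈ reduce X 2 true S E, x ∈ S ∧ (x ∈ X ∨ 2 < mdeg E x) := by
  intro n
  induction n with
  | zero =>
    intro S E hcard x hx
    rw [reduce] at hx
    split at hx
    next h =>
      exfalso
      have := Finset.card_pos.2 ⟨h.choose, h.choose_spec.1⟩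
      omega
    next h =>
      push_neg at h
      refine ⟨hx, ?_⟩
      by_cases hX : x ∈ X
      · exact Or.inl hX
      · exact Or.inr (h x hx hX)
  | succ n ih =>
    intro S E hcard x hx
    rw [reduce] at hx
    split at hx
    next h =>
      have hlt := Finset.card_erase_lt_of_mem h.choose_spec.1
      have hrec := ih (S.erase h.choose) (nextE true h.choose E) (by omega) x hx
      refine ⟨Finset.mem_of_mem_erase hrec.1, ?_⟩
      rcases hrec.2 with h1 | h2
      · exact Or.inl h1
      · right
        have hne : x ≠ h.choose := Finset.ne_of_mem_erase hrec.1
        have := mdeg_nextE_le hne E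
        omega
    next h =>
      push_neg at h
      refine ⟨hx, ?_⟩
      by_cases hX : x ∈ X
      · exact Or.inl hX
      · exact Or.inr (h x hx hX)

lemma reduce_spec (X : Finset W) (S : Finset W) (E : Multiset (Sym2 W)) :
    ∀ x ∈ reduce X 2 true S E, x ∈ S ∧ (x ∈ X ∨ 2 < mdeg E x) :=
  reduce_spec_aux X S.card S E le_rfl

lemma mdeg_filter_map {α β : Type} (M : Multiset α) (g : α → Sym2 β)
    (p : Sym2 β → Prop) [DecidablePred p] (x : β) :
    mdeg ((M.map g).filter p) x =
      (M.map (fun a => if p (g a) then wt x (g a) else 0)).sum := by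
  induction M using Multiset.induction with
  | empty => simp [mdeg]
  | cons a M ih =>
    rw [Multiset.map_cons, Multiset.filter_cons, mdeg_add, ih, Multiset.map_cons,
      Multiset.sum_cons]
    by_cases hpa : p (g a)
    · rw [if_pos hpa, if_pos hpa]
      have : mdeg {g a} x = wt x (g a) := by simp [mdeg_eq_sum_wt]
      omega
    · rw [if_neg hpa, if_neg hpa]
      simp [mdeg]

lemma mdeg_torso_count {α β : Type} (A : Finset α) (g : α → Sym2 β) (x : β)
    (instd : DecidablePred (fun e : Sym2 β => ¬ e.IsDiag))
    (instf : DecidablePred (fun a : α => ¬ (g a).IsDiag ∧ x ∈ g a)) :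
    mdeg (@Multiset.filter _ (fun e => ¬ e.IsDiag) instd (A.val.map g)) x =
      (@Finset.filter _ _ instf A).card := by
  rw [@mdeg_filter_map _ _ _ _ _ instd, Finset.card_filter]
  show Finset.sum A _ = _
  apply Finset.sum_congr rfl
  intro a _
  by_cases hd : (g a).IsDiag
  · simp [hd]
  · by_cases hm : x ∈ g a
    · have hwt : wt x (g a) = 1 := by
        unfold wt
        rw [if_neg, if_pos hm]
        intro h
        exact hd (h ▸ Sym2.diag_isDiag x)
      simp [hd, hm, hwt]
    · have hwt : wt x (g a) = 0 := by
        unfold wt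
        rw [if_neg, if_neg hm]
        intro h
        exact hd (h ▸ Sym2.diag_isDiag x)
      simp [hd, hm, hwt]


theorem key {V W : Type} [Fintype V] [Fintype W] (G : SimpleGraph V) (H : SimpleGraph W)
    (ι : V ↪ W) (hhom : ∀ u v : V, G.Adj u v → H.Adj (ι u) (ι v))
    (T : SimpleGraph W) (hmsf : IsMSF H T) :
    ∃ D : TCD G, D.width ≤ ecwPair H T := by
  classical
  by_cases hW : Nonempty W
  case neg =>
    rw [not_nonempty_iff] at hW
    haveI := hW
    haveI hV : IsEmpty V := Function.isEmpty ι
    haveI : IsEmpty (Sym2 V) := ⟨fun e => Sym2.ind (fun x _ => (IsEmpty.false x).elim) e⟩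
    have htree : (⊥ : SimpleGraph (Fin 1)).IsTree := by
      constructor
      · constructor
        · intro u v
          rw [Subsingleton.elim u v]
      · exact SimpleGraph.isAcyclic_bot
    set D0 : TCD G := ⟨1, ⊥, htree, 0, fun _ => ∅, fun v => (IsEmpty.false v).elim⟩ with hD0
    refine ⟨D0, ?_⟩
    rw [TCD.width]
    refine Finset.sup_le ?_
    intro t _
    have hadh : D0.adh t = 0 := by
      rw [TCD.adh]
      rw [Finset.univ_eq_empty, Finset.filter_empty, Finset.card_empty]
    have htor : D0.tor t = 0 := by
      rw [TCD.tor]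
      haveI : IsEmpty {s : Fin 1 | s ≠ t} := ⟨fun s => s.2 (Subsingleton.elim _ _)⟩
      haveI : IsEmpty (D0.Cmp t) :=
        ⟨fun c => SimpleGraph.ConnectedComponent.ind (fun v => (IsEmpty.false v).elim) c⟩
      have hS : D0.torsoS t = ∅ := by
        rw [TCD.torsoS]
        rw [Finset.univ_eq_empty]
        simp [hD0]
        rfl
      rw [hS]
      refine Finset.card_eq_zero.2 ?_
      rw [Finset.eq_empty_iff_forall_notMem]
      intro x hx
      have := (reduce_spec _ _ _ x hx).1
      simp at this
    rw [hadh, htor]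
    exact le_trans (le_of_eq (max_self 0)) (Nat.zero_le _)
  case pos =>
    obtain ⟨T', hTT', htree'⟩ := exists_tree_ge T hmsf.2.1
    set n := Fintype.card W with hn
    have npos : 0 < n := Fintype.card_pos
    set ew : Fin n ≃ W := (Fintype.equivFin W).symm with hew
    set TT : SimpleGraph (Fin n) := T'.comap ew.toEmbedding with hTTdef
    set iso : TT ≃g T' := SimpleGraph.Iso.comap ew T' with hiso
    have hisoapp : ∀ a : Fin n, iso a = ew a := fun a => by
      rw [hiso]; exact SimpleGraph.Iso.comap_apply ew T' a
    have hisosymm : ∀ x : W, iso.symm x = ew.symm x := fun x => by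
      rw [hiso]; exact SimpleGraph.Iso.comap_symm_apply ew T' x
    have hTTadj : ∀ a b : Fin n, TT.Adj a b ↔ T'.Adj (ew a) (ew b) := fun a b => Iff.rfl
    have htree : TT.IsTree := by
      constructor
      · exact iso.connected_iff.mpr htree'.isConnected
      · intro a p hp
        exact htree'.IsAcyclic (p.map iso.toHom)
          ((SimpleGraph.Walk.map_isCycle_iff_of_injective
            (by exact iso.toEquiv.injective)).mpr hp)
    have hpart : ∀ v : V, ∃! s : Fin n,
        v ∈ Finset.univ.filter (fun u : V => ι u = ew s) := by
      intro v
      refine ⟨ew.symm (ι v), by simp, ?_⟩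
      intro s hs
      simp only [Finset.mem_filter, Finset.mem_univ, true_and] at hs
      rw [hs]
      simp
    set D : TCD G :=
      ⟨n, TT, htree, ⟨0, npos⟩, fun s => Finset.univ.filter (fun u : V => ι u = ew s),
        hpart⟩ with hD
    have hkey : ∀ t : Fin n,
        D.adh t ≤ 1 + elocCard H T (ew t) ∧ D.tor t ≤ 1 + elocCard H T (ew t) := by
      intro t
      set ELset : Finset (Sym2 W) := Finset.univ.filter (fun e : Sym2 W =>
        e ∈ H.edgeSet ∧ e ∉ T.edgeSet ∧
          ∃ a b : W, e = s(a, b) ∧ ∃ p : T.Walk a b, p.IsPath ∧ (ew t) ∈ p.support) with hEL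
      have hELcard : ELset.card = elocCard H T (ew t) := rfl
      have hbag : ∀ (v : V) (s : Fin n), v ∈ D.bag s ↔ ι v = ew s := by
        intro v s
        simp [D]
      have hdesc_self : t ∈ D.desc t := fun p => p.end_mem_support
      have hY : ∀ v : V, v ∈ D.Y t ↔ ew.symm (ι v) ∈ D.desc t := by
        intro v
        constructor
        · intro hv
          rw [TCD.Y, Finset.mem_filter] at hv
          obtain ⟨-, s, hs1, hs2⟩ := hv
          have hs2' : ι v = ew s := (hbag v s).1 hs2
          rw [hs2', Equiv.symm_apply_apply]
          exact hs1
        · intro h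
          rw [TCD.Y, Finset.mem_filter]
          exact ⟨Finset.mem_univ _, ew.symm (ι v), h,
            (hbag _ _).2 (Equiv.apply_symm_apply ew (ι v)).symm⟩
      have hsep : ∀ a b : Fin n, a ∈ D.desc t → b ∉ D.desc t →
          ∀ q : TT.Walk a b, t ∈ q.support := by
        intro a b ha hb q
        exact pass_through ha hb q
      have hpass : ∀ a b : W, (∀ q : TT.Walk (ew.symm a) (ew.symm b), t ∈ q.support) →
          ∀ p : T.Walk a b, ew t ∈ p.support := by
        intro a b hq p
        have hedges : ∀ e ∈ p.edges, e ∈ T'.edgeSet := fun e he =>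
          SimpleGraph.edgeSet_mono hTT' (p.edges_subset_edgeSet he)
        set p' := p.transfer T' hedges with hp'
        have hq' := hq ((p'.map iso.symm.toHom).copy (hisosymm a) (hisosymm b))
        rw [SimpleGraph.Walk.support_copy, SimpleGraph.Walk.support_map] at hq'
        obtain ⟨x, hx1, hx2⟩ := List.mem_map.1 hq'
        have hx3 : ew.symm x = t := by rw [← hisosymm]; exact hx2
        have hx4 : x = ew t := (Equiv.symm_apply_eq ew).1 hx3
        rw [← SimpleGraph.Walk.support_transfer p hedges, ← hp', ← hx4]
        exact hx1
      have hadjTT : ∀ a b : W, T.Adj a b → TT.Adj (ew.symm a) (ew.symm b) := by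
        intro a b hab
        have : T'.Adj a b := hTT' hab
        have h2 : T'.Adj (ew (ew.symm a)) (ew (ew.symm b)) := by
          rwa [Equiv.apply_symm_apply, Equiv.apply_symm_apply]
        exact h2
      have hdesc_not_t : ∀ s : Fin n, s ∉ D.desc t → s ≠ t := by
        intro s hs heq
        exact hs (heq ▸ hdesc_self)
      have hnotdesc : ∀ s : Fin n, s ∉ D.desc t → ∃ p : TT.Walk D.root s, t ∉ p.support := by
        intro s hs
        by_contra h
        push_neg at h
        exact hs (fun p => h p)
      -- the unique "parent-side" tree edge finset
      set Btre : Finset (Sym2 W) := Finset.univ.filter (fun f : Sym2 W =>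
        f ∈ T.edgeSet ∧ ∃ x : W, f = s(ew t, x) ∧ ew.symm x ∉ D.desc t) with hBtre
      have hBtre_card : Btre.card ≤ 1 := by
        refine Finset.card_le_one.2 ?_
        intro f1 h1 f2 h2
        rw [hBtre, Finset.mem_filter] at h1 h2
        obtain ⟨-, hT1, x1, rfl, hx1⟩ := h1
        obtain ⟨-, hT2, x2, rfl, hx2⟩ := h2
        have hadj1 : TT.Adj t (ew.symm x1) := by
          have := hadjTT _ _ ((SimpleGraph.mem_edgeSet _).1 hT1)
          rwa [Equiv.symm_apply_apply] at this
        have hadj2 : TT.Adj t (ew.symm x2) := by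
          have := hadjTT _ _ ((SimpleGraph.mem_edgeSet _).1 hT2)
          rwa [Equiv.symm_apply_apply] at this
        obtain ⟨p1, hp1⟩ := hnotdesc _ hx1
        obtain ⟨p2, hp2⟩ := hnotdesc _ hx2
        have hq : t ∉ (p1.reverse.append p2).support := by
          rw [SimpleGraph.Walk.mem_support_append_iff]
          push_neg
          constructor
          · rw [SimpleGraph.Walk.support_reverse, List.mem_reverse]
            exact hp1
          · exact hp2
        have := tree_nbr_unique htree hadj1 hadj2 (p1.reverse.append p2) hq
        have hx12 : x1 = x2 := by
          have := congrArg ew this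
          rwa [Equiv.apply_symm_apply, Equiv.apply_symm_apply] at this
        rw [hx12]
      have hcard1 : ∀ (A : Finset (Sym2 V)), (∀ e ∈ A, Sym2.map ι e ∈ ELset ∪ Btre) →
          A.card ≤ 1 + elocCard H T (ew t) := by
        intro A hsub
        calc A.card = (A.image (Sym2.map ι)).card :=
              (Finset.card_image_of_injective A (Sym2.map.injective ι.injective)).symm
          _ ≤ (ELset ∪ Btre).card := Finset.card_le_card (by
              intro f hf
              obtain ⟨e, he, rfl⟩ := Finset.mem_image.1 hf
              exact hsub e he)
          _ ≤ ELset.card + Btre.card := Finset.card_union_le _ _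
          _ ≤ 1 + elocCard H T (ew t) := by
              rw [hELcard]
              omega
      constructor
      · -- adhesion bound
        rw [TCD.adh]
        refine hcard1 _ ?_
        intro e he
        rw [Finset.mem_filter] at he
        obtain ⟨-, hGe, a, b, rfl, hay, hbny⟩ := he
        have hGadj : G.Adj a b := (SimpleGraph.mem_edgeSet _).1 hGe
        have hsa : ew.symm (ι a) ∈ D.desc t := (hY a).1 hay
        have hsb : ew.symm (ι b) ∉ D.desc t := fun h => hbny ((hY b).2 h)
        have hq : ∀ q : TT.Walk (ew.symm (ι a)) (ew.symm (ι b)), t ∈ q.support :=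
          hsep _ _ hsa hsb
        rw [Sym2.map_pair_eq]
        by_cases hTe : s(ι a, ι b) ∈ T.edgeSet
        · refine Finset.mem_union_right _ ?_
          rw [hBtre, Finset.mem_filter]
          refine ⟨Finset.mem_univ _, hTe, ?_⟩
          have hadj : TT.Adj (ew.symm (ι a)) (ew.symm (ι b)) :=
            hadjTT _ _ ((SimpleGraph.mem_edgeSet _).1 hTe)
          have hmem := hq (SimpleGraph.Walk.cons hadj SimpleGraph.Walk.nil)
          rw [SimpleGraph.Walk.support_cons, SimpleGraph.Walk.support_nil] at hmem
          simp only [List.mem_cons, List.mem_singleton, List.not_mem_nil, or_false] at hmem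
          rcases hmem with hmem | hmem
          · have hta : ι a = ew t := by
              rw [hmem, Equiv.apply_symm_apply]
            exact ⟨ι b, by rw [hta], hsb⟩
          · exfalso
            exact hsb (hmem ▸ hdesc_self)
        · refine Finset.mem_union_left _ ?_
          rw [hEL, Finset.mem_filter]
          refine ⟨Finset.mem_univ _, (SimpleGraph.mem_edgeSet _).2 (hhom a b hGadj), hTe,
            ι a, ι b, rfl, ?_⟩
          obtain ⟨p0⟩ := hmsf.2.2 _ _ (hhom a b hGadj)
          exact ⟨p0.toPath.1, p0.toPath.2, hpass (ι a) (ι b) hq p0.toPath.1⟩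
      · -- torso bound
        rw [TCD.tor]
        set τ := D.toTorso t with hτdef
        -- basic facts about the consolidation map
        have hτ1 : ∀ v : V, ι v = ew t → τ v = Sum.inl v := by
          intro v hv
          rw [hτdef, TCD.toTorso, dif_neg]
          rintro ⟨s, hs1, hs2⟩
          have := (hbag v s).1 hs2
          exact hs1 (ew.injective (by rw [← this, hv]))
        have hτ2 : ∀ (v : V) (h : ew.symm (ι v) ≠ t), τ v =
            Sum.inr ((SimpleGraph.induce {s : Fin n | s ≠ t} TT).connectedComponentMk
              ⟨ew.symm (ι v), h⟩) := by
          intro v h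
          have hex : ∃ s : Fin n, s ≠ t ∧ v ∈ D.bag s :=
            ⟨ew.symm (ι v), h, (hbag _ _).2 (Equiv.apply_symm_apply ew (ι v)).symm⟩
          rw [hτdef, TCD.toTorso, dif_pos hex]
          have h1 : hex.choose = ew.symm (ι v) := by
            have h2 := (hbag _ _).1 hex.choose_spec.2
            rw [h2, Equiv.symm_apply_apply]
          congr 1
          exact congrArg _ (Subtype.ext h1)
        set cOf : W → Option (D.Cmp t) := fun x =>
          if h : ew.symm x ≠ t then
            some ((SimpleGraph.induce {s : Fin n | s ≠ t} TT).connectedComponentMk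
              ⟨ew.symm x, h⟩)
          else none with hcOf
        set touch : D.Cmp t → Sym2 W → Prop :=
          fun c f => ∃ x, x ∈ f ∧ cOf x = some c with htouch
        set incc : D.Cmp t → ℕ := fun c => (ELset.filter (fun f => touch c f)).card with hincc
        -- Claim A : degree bound per component
        have hA : ∀ c : D.Cmp t, mdeg (D.torsoE t) (Sum.inr c) ≤ 1 + incc c := by
          intro c
          have hcount : mdeg (D.torsoE t) (Sum.inr c) =
              ((Finset.univ.filter (fun e : Sym2 V => e ∈ G.edgeSet)).filter
                (fun e => ¬ (Sym2.map τ e).IsDiag ∧ (Sum.inr c : V ⊕ D.Cmp t) ∈ Sym2.map τ e)).card := by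
            rw [TCD.torsoE]
            exact mdeg_torso_count _ _ _ _ _
          rw [hcount]
          set Btc : Finset (Sym2 W) := Finset.univ.filter (fun f : Sym2 W =>
            f ∈ T.edgeSet ∧ ∃ x : W, f = s(ew t, x) ∧ cOf x = some c) with hBtc
          have hcOf_spec : ∀ (x : W), cOf x = some c →
              ∃ h : ew.symm x ≠ t,
                (SimpleGraph.induce {s : Fin n | s ≠ t} TT).connectedComponentMk
                  ⟨ew.symm x, h⟩ = c := by
            intro x hx
            have hx' : (if h : ew.symm x ≠ t then
                some ((SimpleGraph.induce {s : Fin n | s ≠ t} TT).connectedComponentMk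
                  ⟨ew.symm x, h⟩)
              else none) = some c := hx
            by_cases h : ew.symm x ≠ t
            · rw [dif_pos h] at hx'
              exact ⟨h, Option.some.inj hx'⟩
            · rw [dif_neg h] at hx'
              exact absurd hx' (by simp)
          have hBtc_card : Btc.card ≤ 1 := by
            refine Finset.card_le_one.2 ?_
            intro f1 h1 f2 h2
            rw [hBtc, Finset.mem_filter] at h1 h2
            obtain ⟨-, hT1, x1, rfl, hc1⟩ := h1
            obtain ⟨-, hT2, x2, rfl, hc2⟩ := h2
            obtain ⟨hne1, hmk1⟩ := hcOf_spec x1 hc1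
            obtain ⟨hne2, hmk2⟩ := hcOf_spec x2 hc2
            have hadj1 : TT.Adj t (ew.symm x1) := by
              have := hadjTT _ _ ((SimpleGraph.mem_edgeSet _).1 hT1)
              rwa [Equiv.symm_apply_apply] at this
            have hadj2 : TT.Adj t (ew.symm x2) := by
              have := hadjTT _ _ ((SimpleGraph.mem_edgeSet _).1 hT2)
              rwa [Equiv.symm_apply_apply] at this
            have hreach : (SimpleGraph.induce {s : Fin n | s ≠ t} TT).Reachable
                ⟨ew.symm x1, hne1⟩ ⟨ew.symm x2, hne2⟩ := by
              have := hmk1.trans hmk2.symm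
              exact SimpleGraph.ConnectedComponent.exact this
            obtain ⟨p, hp⟩ := walk_of_induce hreach
            have hnt : t ∉ p.support := fun ht => (hp t ht) rfl
            have := tree_nbr_unique htree hadj1 hadj2 p hnt
            have hx12 : x1 = x2 := by
              have := congrArg ew this
              rwa [Equiv.apply_symm_apply, Equiv.apply_symm_apply] at this
            rw [hx12]
          -- ordered-edge classification
          have hord : ∀ u v : V, G.Adj u v → τ u = Sum.inr c → τ v ≠ Sum.inr c →
              s(ι u, ι v) ∈ ELset.filter (fun f => touch c f) ∪ Btc := by
            intro u v hGadj hu hv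
            have hut : ew.symm (ι u) ≠ t := by
              intro heq
              have : ι u = ew t := (Equiv.symm_apply_eq ew).1 heq
              rw [hτ1 u this] at hu
              exact absurd hu (by simp)
            have hcu : c = (SimpleGraph.induce {s : Fin n | s ≠ t} TT).connectedComponentMk
                ⟨ew.symm (ι u), hut⟩ := by
              rw [hτ2 u hut] at hu
              exact (Sum.inr.inj hu).symm
            have hcOfu : cOf (ι u) = some c := by
              show (if h : ew.symm (ι u) ≠ t then
                  some ((SimpleGraph.induce {s : Fin n | s ≠ t} TT).connectedComponentMk
                    ⟨ew.symm (ι u), h⟩)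
                else none) = some c
              rw [dif_pos hut, ← hcu]
              rfl
            have htouchu : touch c s(ι u, ι v) :=
              ⟨ι u, Sym2.mem_iff.2 (Or.inl rfl), hcOfu⟩
            by_cases hvt : ew.symm (ι v) = t
            · -- v sits in the central bag
              have hvb : ι v = ew t := (Equiv.symm_apply_eq ew).1 hvt
              by_cases hTe : s(ι u, ι v) ∈ T.edgeSet
              · refine Finset.mem_union_right _ ?_
                rw [hBtc, Finset.mem_filter]
                exact ⟨Finset.mem_univ _, hTe, ι u, by rw [hvb, Sym2.eq_swap], hcOfu⟩
              · refine Finset.mem_union_left _ ?_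
                rw [Finset.mem_filter]
                refine ⟨?_, htouchu⟩
                rw [hEL, Finset.mem_filter]
                refine ⟨Finset.mem_univ _, (SimpleGraph.mem_edgeSet _).2 (hhom u v hGadj), hTe,
                  ι u, ι v, rfl, ?_⟩
                obtain ⟨p0⟩ := hmsf.2.2 _ _ (hhom u v hGadj)
                refine ⟨p0.toPath.1, p0.toPath.2, hpass (ι u) (ι v) ?_ p0.toPath.1⟩
                intro q
                rw [← hvt]
                exact q.end_mem_support
            · -- v sits in another component
              have hqall : ∀ q : TT.Walk (ew.symm (ι u)) (ew.symm (ι v)), t ∈ q.support := by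
                intro q
                by_contra hq
                have hreach := reachable_induce_of_walk {s : Fin n | s ≠ t} q
                  (fun x hx hxt => hq (hxt ▸ hx)) hut hvt
                have := SimpleGraph.ConnectedComponent.sound hreach
                rw [hτ2 v hvt, ← this, ← hcu] at hv
                exact hv rfl
              by_cases hTe : s(ι u, ι v) ∈ T.edgeSet
              · exfalso
                have hadj : TT.Adj (ew.symm (ι u)) (ew.symm (ι v)) :=
                  hadjTT _ _ ((SimpleGraph.mem_edgeSet _).1 hTe)
                have hmem := hqall (SimpleGraph.Walk.cons hadj SimpleGraph.Walk.nil)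
                rw [SimpleGraph.Walk.support_cons, SimpleGraph.Walk.support_nil] at hmem
                simp only [List.mem_cons, List.mem_singleton, List.not_mem_nil, or_false] at hmem
                rcases hmem with hmem | hmem
                · exact hut hmem.symm
                · exact hvt hmem.symm
              · refine Finset.mem_union_left _ ?_
                rw [Finset.mem_filter]
                refine ⟨?_, htouchu⟩
                rw [hEL, Finset.mem_filter]
                refine ⟨Finset.mem_univ _, (SimpleGraph.mem_edgeSet _).2 (hhom u v hGadj), hTe,
                  ι u, ι v, rfl, ?_⟩
                obtain ⟨p0⟩ := hmsf.2.2 _ _ (hhom u v hGadj)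
                exact ⟨p0.toPath.1, p0.toPath.2, hpass (ι u) (ι v) hqall p0.toPath.1⟩
          -- count via the injection e ↦ Sym2.map ι e
          have hsubim : ∀ e ∈ (Finset.univ.filter (fun e : Sym2 V => e ∈ G.edgeSet)).filter
              (fun e => ¬ (Sym2.map τ e).IsDiag ∧ (Sum.inr c : V ⊕ D.Cmp t) ∈ Sym2.map τ e),
              Sym2.map ι e ∈ ELset.filter (fun f => touch c f) ∪ Btc := by
            intro e he
            rw [Finset.mem_filter, Finset.mem_filter] at he
            obtain ⟨⟨-, hGe⟩, hnd, hmem⟩ := he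
            induction e using Sym2.ind with
            | _ u v =>
              have hGadj : G.Adj u v := (SimpleGraph.mem_edgeSet _).1 hGe
              rw [Sym2.map_pair_eq] at hnd hmem
              rw [Sym2.mem_iff] at hmem
              rw [Sym2.map_pair_eq]
              rcases hmem with hmem | hmem
              · have hne : τ v ≠ Sum.inr c := by
                  intro hvv
                  exact hnd (Sym2.mk_isDiag_iff.2 (hmem.symm ▸ hvv ▸ rfl))
                exact hord u v hGadj hmem.symm hne
              · have hne : τ u ≠ Sum.inr c := by
                  intro huu
                  exact hnd (Sym2.mk_isDiag_iff.2 (hmem.symm ▸ huu ▸ rfl))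
                rw [Sym2.eq_swap]
                exact hord v u hGadj.symm hmem.symm hne
          calc ((Finset.univ.filter (fun e : Sym2 V => e ∈ G.edgeSet)).filter
                (fun e => ¬ (Sym2.map τ e).IsDiag ∧ (Sum.inr c : V ⊕ D.Cmp t) ∈ Sym2.map τ e)).card
              = (((Finset.univ.filter (fun e : Sym2 V => e ∈ G.edgeSet)).filter
                (fun e => ¬ (Sym2.map τ e).IsDiag ∧ (Sum.inr c : V ⊕ D.Cmp t) ∈ Sym2.map τ e)).image
                  (Sym2.map ι)).card :=
                (Finset.card_image_of_injective _ (Sym2.map.injective ι.injective)).symm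
            _ ≤ (ELset.filter (fun f => touch c f) ∪ Btc).card := Finset.card_le_card (by
                intro f hf
                obtain ⟨e, he, rfl⟩ := Finset.mem_image.1 hf
                exact hsubim e he)
            _ ≤ (ELset.filter (fun f => touch c f)).card + Btc.card := Finset.card_union_le _ _
            _ ≤ 1 + incc c := by
                have hrfl : incc c = (ELset.filter (fun f => touch c f)).card := rfl
                omega
        -- Claim B : total incidence bound
        have hB : ∑ c : D.Cmp t, incc c ≤ 2 * ELset.card := by
          have h1 : ∀ c : D.Cmp t, incc c = ∑ f ∈ ELset, (if touch c f then 1 else 0) := by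
            intro c
            exact Finset.card_filter _ _
          have h2 : ∀ f : Sym2 W, (Finset.univ.filter (fun c : D.Cmp t => touch c f)).card ≤ 2 := by
            intro f
            induction f using Sym2.ind with
            | _ a b =>
              have hsub2 : (Finset.univ.filter (fun c : D.Cmp t => touch c s(a, b))) ⊆
                  (Finset.univ.filter (fun c : D.Cmp t => cOf a = some c)) ∪
                  (Finset.univ.filter (fun c : D.Cmp t => cOf b = some c)) := by
                intro c hc
                rw [Finset.mem_filter] at hc
                obtain ⟨-, x, hx1, hx2⟩ := hc
                rw [Sym2.mem_iff] at hx1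
                rcases hx1 with rfl | rfl
                · exact Finset.mem_union_left _ (Finset.mem_filter.2 ⟨Finset.mem_univ _, hx2⟩)
                · exact Finset.mem_union_right _ (Finset.mem_filter.2 ⟨Finset.mem_univ _, hx2⟩)
              have hc1 : (Finset.univ.filter (fun c : D.Cmp t => cOf a = some c)).card ≤ 1 := by
                refine Finset.card_le_one.2 ?_
                intro c1 hc1 c2 hc2
                rw [Finset.mem_filter] at hc1 hc2
                exact Option.some.inj (hc1.2.symm.trans hc2.2)
              have hc2 : (Finset.univ.filter (fun c : D.Cmp t => cOf b = some c)).card ≤ 1 := by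
                refine Finset.card_le_one.2 ?_
                intro c1 hc1 c2 hc2
                rw [Finset.mem_filter] at hc1 hc2
                exact Option.some.inj (hc1.2.symm.trans hc2.2)
              calc (Finset.univ.filter (fun c : D.Cmp t => touch c s(a, b))).card
                  ≤ _ := Finset.card_le_card hsub2
                _ ≤ _ := Finset.card_union_le _ _
                _ ≤ 2 := by omega
          calc ∑ c : D.Cmp t, incc c
              = ∑ c : D.Cmp t, ∑ f ∈ ELset, (if touch c f then 1 else 0) := by
                exact Finset.sum_congr rfl (fun c _ => h1 c)
            _ = ∑ f ∈ ELset, ∑ c : D.Cmp t, (if touch c f then 1 else 0) := Finset.sum_comm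
            _ ≤ ∑ _f ∈ ELset, 2 := Finset.sum_le_sum (fun f _ => by
                calc ∑ c : D.Cmp t, (if touch c f then 1 else 0)
                    = (Finset.univ.filter (fun c : D.Cmp t => touch c f)).card :=
                      (Finset.card_filter _ _).symm
                  _ ≤ 2 := h2 f)
            _ = 2 * ELset.card := by rw [Finset.sum_const, smul_eq_mul, Nat.mul_comm]
        -- combine
        set bad : Finset (D.Cmp t) :=
          Finset.univ.filter (fun c : D.Cmp t => 2 < mdeg (D.torsoE t) (Sum.inr c)) with hbad
        have hbadcard : bad.card ≤ ELset.card := by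
          have h2 : ∀ c ∈ bad, 2 ≤ incc c := by
            intro c hc
            rw [hbad, Finset.mem_filter] at hc
            have := hA c
            omega
          have h3 : 2 * bad.card ≤ 2 * ELset.card := by
            calc 2 * bad.card = ∑ _c ∈ bad, 2 := by
                  rw [Finset.sum_const, smul_eq_mul, Nat.mul_comm]
              _ ≤ ∑ c ∈ bad, incc c := Finset.sum_le_sum h2
              _ ≤ ∑ c : D.Cmp t, incc c :=
                  Finset.sum_le_sum_of_subset (Finset.subset_univ bad)
              _ ≤ 2 * ELset.card := hB
          omega
        have hXcard : ((D.bag t).image Sum.inl : Finset (V ⊕ D.Cmp t)).card ≤ 1 := by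
          refine le_trans Finset.card_image_le ?_
          refine Finset.card_le_one.2 ?_
          intro u1 hu1 u2 hu2
          have e1 : ι u1 = ew t := (hbag _ _).1 hu1
          have e2 : ι u2 = ew t := (hbag _ _).1 hu2
          exact ι.injective (e1.trans e2.symm)
        have hred := reduce_spec ((D.bag t).image Sum.inl) (D.torsoS t) (D.torsoE t)
        have hsub : reduce ((D.bag t).image Sum.inl) 2 true (D.torsoS t) (D.torsoE t) ⊆
            ((D.bag t).image Sum.inl) ∪ bad.image Sum.inr := by
          intro x hx
          obtain ⟨hxS, hxcase⟩ := hred x hx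
          rcases hxcase with hxX | hxdeg
          · exact Finset.mem_union_left _ hxX
          · rw [TCD.torsoS, Finset.mem_union] at hxS
            rcases hxS with hxl | hxr
            · exact Finset.mem_union_left _ hxl
            · obtain ⟨cc, -, rfl⟩ := Finset.mem_image.1 hxr
              refine Finset.mem_union_right _ ?_
              refine Finset.mem_image.2 ⟨cc, ?_, rfl⟩
              rw [hbad, Finset.mem_filter]
              exact ⟨Finset.mem_univ _, hxdeg⟩
        calc (reduce ((D.bag t).image Sum.inl) 2 true (D.torsoS t) (D.torsoE t)).card
            ≤ (((D.bag t).image Sum.inl) ∪ bad.image Sum.inr).card := Finset.card_le_card hsub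
          _ ≤ ((D.bag t).image Sum.inl).card + (bad.image Sum.inr).card :=
              Finset.card_union_le _ _
          _ ≤ 1 + elocCard H T (ew t) := by
              have himg : ((bad.image Sum.inr : Finset (V ⊕ D.Cmp t))).card ≤ bad.card :=
                Finset.card_image_le
              have hb2 : (bad.image Sum.inr : Finset (V ⊕ D.Cmp t)).card ≤
                  elocCard H T (ew t) := by
                rw [← hELcard]
                omega
              omega
    refine ⟨D, ?_⟩
    rw [TCD.width, ecwPair]
    refine Finset.sup_le ?_
    intro t _
    have h1 := (hkey t).1
    have h2 := (hkey t).2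
    have h3 : elocCard H T (ew t) ≤ Finset.univ.sup (fun v => elocCard H T v) :=
      Finset.le_sup (Finset.mem_univ _)
    exact max_le (by omega) (by omega)

theorem stmt12' {V : Type} [Fintype V] (G : SimpleGraph V) : tcw G ≤ secw G := by
  classical
  obtain ⟨T0, hT0⟩ := exists_msf G
  have hne : {k | ∃ (W : Type) (fW : Fintype W) (H : SimpleGraph W) (ι : V ↪ W),
      (∀ u v : V, G.Adj u v → H.Adj (ι u) (ι v)) ∧
      ∃ T : SimpleGraph W, IsMSF H T ∧ @ecwPair W fW H T ≤ k}.Nonempty :=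
    ⟨ecwPair G T0, V, inferInstance, G, Function.Embedding.refl V,
      fun u v h => h, T0, hT0, le_rfl⟩
  have hmem := Nat.sInf_mem hne
  obtain ⟨W, fW, H, ι, hhom, T, hmsf, hecw⟩ := hmem
  obtain ⟨D, hD⟩ := @key V W _ fW G H ι hhom T hmsf
  exact Nat.sInf_le ⟨D, le_trans hD hecw⟩

end PaperSTCW


namespace PaperSTCW

/-- for every graph `G`, `tcw(G) ≤ secw(G)`. -/
theorem stmt12 {V : Type} [Fintype V] (G : SimpleGraph V) : tcw G ≤ secw G := stmt12' G
end PaperSTCW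
end
end
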